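/- arXiv:1211.1876 — 3 statements merged into one kernel-verified Lean document; each statement's English description precedes it below -/
import Mathlib

section
/- Let F be a field, G a finite group, and V a non-trivial G-module (i.e., the G-action on V is not the trivial action). Then the dimension of the vector coinvariants grows unboundedly: lim_{m→∞} dim_F F[V^m]_G = ∞. -/
open MvPolynomial

variable {F G ι : Type*} [Field F] [Group G] [Fintype ι] [DecidableEq ι]

/-- The (left) action of a group element `σ` on the polynomial algebra
`F[V] = S(V^*)` presented as `MvPolynomial ι F`, for a matrix representation
`ρ : G →* GL(ι, F)` of `G` on `V = (ι → F)`.  It is given by `σ • f = f ∘ σ⁻¹`,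
i.e. by linear substitution of the variables using the matrix of `ρ σ⁻¹`. -/
noncomputable def polyAct (ρ : G →* (Matrix ι ι F)ˣ) (σ : G)
    (f : MvPolynomial ι F) : MvPolynomial ι F :=
  MvPolynomial.aeval
    (fun i => ∑ j, ((ρ σ⁻¹ : Matrix ι ι F) i j) • (MvPolynomial.X j : MvPolynomial ι F)) f

/-- A polynomial is invariant if it is fixed by the action of every group element. -/
def IsInv (ρ : G →* (Matrix ι ι F)ˣ) (f : MvPolynomial ι F) : Prop :=
  ∀ σ : G, polyAct ρ σ f = f

/-- The Hilbert ideal: the ideal of `F[V]` generated by the homogeneous invariants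
of positive degree. -/
noncomputable def hilbertIdeal (ρ : G →* (Matrix ι ι F)ˣ) : Ideal (MvPolynomial ι F) :=
  Ideal.span {f : MvPolynomial ι F | (∃ d, 0 < d ∧ f.IsHomogeneous d) ∧ IsInv ρ f}

/-- The top degree of the coinvariant algebra `F[V]_G = F[V]/(Hilbert ideal)`:
the largest degree `d` such that the degree-`d` homogeneous component of `F[V]_G`
is nonzero; since the Hilbert ideal is homogeneous this is the largest `d` for
which some homogeneous polynomial of degree `d` is not in the Hilbert ideal. -/
noncomputable def topDeg (ρ : G →* (Matrix ι ι F)ˣ) : ℕ :=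
  sSup {d : ℕ | ∃ f : MvPolynomial ι F, f.IsHomogeneous d ∧ f ∉ hilbertIdeal ρ}

/-- The dimension of the coinvariant algebra `F[V]_G` as an `F`-vector space. -/
noncomputable def coinvDim (ρ : G →* (Matrix ι ι F)ˣ) : ℕ :=
  Module.finrank F (MvPolynomial ι F ⧸ hilbertIdeal ρ)

/-- The representation of `G` on the direct sum `V^m` of `m` copies of `V`,
given by block diagonal matrices. -/
noncomputable def glPow (ρ : G →* (Matrix ι ι F)ˣ) (m : ℕ) :
    G →* (Matrix (ι × Fin m) (ι × Fin m) F)ˣ :=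
  (Units.map (Matrix.blockDiagonalRingHom ι (Fin m) F).toMonoidHom).comp
    ((Units.map (Pi.constRingHom (Fin m) (Matrix ι ι F)).toMonoidHom).comp ρ)

set_option linter.unusedSectionVars false

namespace CoinvAux

variable (ρ : G →* (Matrix ι ι F)ˣ)

lemma polyAct_X (σ : G) (i : ι) :
    polyAct ρ σ (X i) = ∑ j, ((ρ σ⁻¹ : Matrix ι ι F) i j) • (X j : MvPolynomial ι F) := by
  simp [polyAct]

lemma polyAct_C (σ : G) (a : F) : polyAct ρ σ (C a : MvPolynomial ι F) = C a := by
  simp [polyAct, algebraMap_eq]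

lemma polyAct_add (σ : G) (f g : MvPolynomial ι F) :
    polyAct ρ σ (f + g) = polyAct ρ σ f + polyAct ρ σ g := by
  simp [polyAct, map_add]

lemma polyAct_mul (σ : G) (f g : MvPolynomial ι F) :
    polyAct ρ σ (f * g) = polyAct ρ σ f * polyAct ρ σ g := by
  simp [polyAct, map_mul]

lemma polyAct_one (f : MvPolynomial ι F) : polyAct ρ 1 f = f := by
  have h : (fun i => ∑ j, ((ρ (1:G)⁻¹ : Matrix ι ι F) i j) • (X j : MvPolynomial ι F))
      = (X : ι → MvPolynomial ι F) := by
    funext i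
    rw [inv_one, map_one, Units.val_one]
    rw [Finset.sum_congr rfl (fun j _ => by
      rw [Matrix.one_apply, ite_smul, one_smul, zero_smul])]
    rw [Finset.sum_ite_eq, if_pos (Finset.mem_univ i)]
  rw [polyAct, h]
  exact aeval_X_left_apply f

lemma polyAct_polyAct (σ τ : G) (f : MvPolynomial ι F) :
    polyAct ρ σ (polyAct ρ τ f) = polyAct ρ (σ * τ) f := by
  let sσ : ι → MvPolynomial ι F := fun i => ∑ j, ((ρ σ⁻¹ : Matrix ι ι F) i j) • X j
  let sτ : ι → MvPolynomial ι F := fun i => ∑ j, ((ρ τ⁻¹ : Matrix ι ι F) i j) • X j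
  let sστ : ι → MvPolynomial ι F := fun i => ∑ j, ((ρ (σ * τ)⁻¹ : Matrix ι ι F) i j) • X j
  have key : (aeval sσ).comp (aeval sτ) = (aeval sστ : MvPolynomial ι F →ₐ[F] MvPolynomial ι F) := by
    apply MvPolynomial.algHom_ext
    intro i
    simp only [AlgHom.comp_apply, aeval_X, sτ, sσ, sστ]
    rw [map_sum]
    simp only [map_smul, aeval_X]
    simp only [Finset.smul_sum, smul_smul]
    rw [Finset.sum_comm]
    refine Finset.sum_congr rfl (fun k _ => ?_)
    rw [← Finset.sum_smul]
    congr 1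
    have h1 : (ρ (σ * τ)⁻¹ : Matrix ι ι F) = (ρ τ⁻¹ : Matrix ι ι F) * (ρ σ⁻¹ : Matrix ι ι F) := by
      rw [mul_inv_rev, map_mul, Units.val_mul]
    rw [h1, Matrix.mul_apply]
  calc polyAct ρ σ (polyAct ρ τ f) = ((aeval sσ).comp (aeval sτ)) f := rfl
    _ = aeval sστ f := by rw [key]
    _ = polyAct ρ (σ * τ) f := rfl

lemma constantCoeff_polyAct (σ : G) (f : MvPolynomial ι F) :
    constantCoeff (polyAct ρ σ f) = constantCoeff f := by
  induction f using MvPolynomial.induction_on with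
  | C a => rw [polyAct_C]
  | add p q hp hq => rw [polyAct_add, map_add, map_add, hp, hq]
  | mul_X p i hp =>
    rw [polyAct_mul, map_mul, map_mul, hp]
    congr 1
    rw [polyAct_X, map_sum]
    rw [Finset.sum_congr rfl (fun j _ => by
      rw [constantCoeff_smul, constantCoeff_X, smul_zero])]
    simp

/-- the coefficient of `X j` (via the partial derivative). -/
noncomputable def linc (f : MvPolynomial ι F) (j : ι) : F :=
  constantCoeff (pderiv j f)

lemma linc_add (f g : MvPolynomial ι F) (j : ι) :
    linc (f + g) j = linc f j + linc g j := by simp [linc]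

lemma linc_C (a : F) (j : ι) : linc (C a : MvPolynomial ι F) j = 0 := by
  simp [linc, pderiv_C]

lemma linc_zero (j : ι) : linc (0 : MvPolynomial ι F) j = 0 := by simp [linc]

lemma linc_smul (a : F) (f : MvPolynomial ι F) (j : ι) :
    linc (a • f) j = a * linc f j := by simp [linc]

lemma linc_X (i j : ι) : linc (X i : MvPolynomial ι F) j = if i = j then 1 else 0 := by
  rcases eq_or_ne i j with rfl | h
  · simp [linc]
  · simp [linc, pderiv_X_of_ne h, h]

lemma linc_mul (f g : MvPolynomial ι F) (j : ι) :
    linc (f * g) j = constantCoeff f * linc g j + linc f j * constantCoeff g := by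
  simp only [linc, pderiv_mul, map_add, map_mul]
  ring

lemma linc_sum {κ : Type*} (s : Finset κ) (f : κ → MvPolynomial ι F) (j : ι) :
    linc (∑ k ∈ s, f k) j = ∑ k ∈ s, linc (f k) j := by
  simp [linc]

lemma linc_polyAct (σ : G) (f : MvPolynomial ι F) (j : ι) :
    linc (polyAct ρ σ f) j = ∑ i, ((ρ σ⁻¹ : Matrix ι ι F) i j) * linc f i := by
  induction f using MvPolynomial.induction_on with
  | C a =>
    rw [polyAct_C]
    simp [linc_C]
  | add p q hp hq =>
    rw [polyAct_add, linc_add, hp, hq, ← Finset.sum_add_distrib]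
    exact Finset.sum_congr rfl (fun i _ => by rw [linc_add]; ring)
  | mul_X p i hp =>
    rw [polyAct_mul, linc_mul, constantCoeff_polyAct, constantCoeff_polyAct]
    have h1 : linc (polyAct ρ σ (X i)) j = (ρ σ⁻¹ : Matrix ι ι F) i j := by
      rw [polyAct_X]
      have h := linc_sum (Finset.univ : Finset ι)
        (fun k => ((ρ σ⁻¹ : Matrix ι ι F) i k) • (X k : MvPolynomial ι F)) j
      rw [h]
      rw [Finset.sum_congr rfl (fun k _ => by rw [linc_smul, linc_X])]
      simp [mul_ite, Finset.sum_ite_eq]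
    have h2 : constantCoeff (X i : MvPolynomial ι F) = 0 := by simp
    rw [h1, h2, mul_zero, add_zero]
    have h4 : ∀ i', ((ρ σ⁻¹ : Matrix ι ι F) i' j) * linc (p * X i) i'
        = if i = i' then constantCoeff p * ((ρ σ⁻¹ : Matrix ι ι F) i' j) else 0 := by
      intro i'
      rw [linc_mul, linc_X, h2, mul_zero, add_zero]
      by_cases h : i = i'
      · simp [h]; ring
      · simp [h]
    rw [Finset.sum_congr rfl (fun i' _ => h4 i'), Finset.sum_ite_eq,
      if_pos (Finset.mem_univ i)]

lemma hilbert_vanish (σ₀ : G) (f : MvPolynomial ι F) (hf : f ∈ hilbertIdeal ρ) :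
    constantCoeff f = 0 ∧
      ∀ j, ∑ i, ((ρ σ₀⁻¹ : Matrix ι ι F) i j) * linc f i = linc f j := by
  have hf' : f ∈ Submodule.span (MvPolynomial ι F)
      {f : MvPolynomial ι F | (∃ d, 0 < d ∧ f.IsHomogeneous d) ∧ IsInv ρ f} := hf
  clear hf
  refine Submodule.span_induction
    (p := fun x _ => constantCoeff x = 0 ∧
      ∀ j, ∑ i, ((ρ σ₀⁻¹ : Matrix ι ι F) i j) * linc x i = linc x j)
    ?_ ?_ ?_ ?_ hf'
  · rintro s ⟨⟨d, hd, hhom⟩, hinv⟩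
    constructor
    · have h0 : coeff 0 s = 0 := hhom.coeff_eq_zero (by
        rw [map_zero]; exact hd.ne)
      rw [constantCoeff_eq]; exact h0
    · intro j
      conv_rhs => rw [← hinv σ₀]
      rw [linc_polyAct]
  · exact ⟨by simp, fun j => by simp [linc_zero]⟩
  · rintro x y hx hy ⟨hx0, hx1⟩ ⟨hy0, hy1⟩
    refine ⟨by rw [map_add, hx0, hy0, add_zero], fun j => ?_⟩
    rw [linc_add, ← hx1 j, ← hy1 j, ← Finset.sum_add_distrib]
    exact Finset.sum_congr rfl (fun i _ => by rw [linc_add]; ring)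
  · rintro a x hx ⟨hx0, hx1⟩
    have hax : a • x = a * x := rfl
    constructor
    · rw [hax, map_mul, hx0, mul_zero]
    · intro j
      have hl : ∀ i', linc (a • x) i' = constantCoeff a * linc x i' := by
        intro i'
        rw [hax, linc_mul, hx0, mul_zero, add_zero]
      simp only [hl]
      rw [← hx1 j, Finset.mul_sum]
      exact Finset.sum_congr rfl (fun i _ => by ring)

end CoinvAux

section Part2

variable (ρ : G →* (Matrix ι ι F)ˣ)
open CoinvAux

lemma isHomogeneous_polyAct_X (σ : G) (i : ι) :
    (polyAct ρ σ (X i)).IsHomogeneous 1 := by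
  rw [polyAct_X]
  apply MvPolynomial.IsHomogeneous.sum
  intro j _
  rw [smul_eq_C_mul]
  simpa using (isHomogeneous_C ι ((ρ σ⁻¹ : Matrix ι ι F) i j)).mul (isHomogeneous_X F j)

lemma coeff_prod_isHomogeneous (s : Finset G) (l : G → MvPolynomial ι F)
    (hl : ∀ σ, (l σ).IsHomogeneous 1) (k : ℕ) :
    ((∏ σ ∈ s, (Polynomial.X - Polynomial.C (l σ))).coeff k).IsHomogeneous (s.card - k) := by
  classical
  induction s using Finset.cons_induction generalizing k with
  | empty =>
    rw [Finset.prod_empty, Polynomial.coeff_one]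
    rcases k with _ | n
    · simpa using isHomogeneous_one ι F
    · simpa using isHomogeneous_zero (σ := ι) (R := F) _
  | cons a s ha ih =>
    rw [Finset.prod_cons, Finset.card_cons, sub_mul, Polynomial.coeff_sub,
      Polynomial.coeff_C_mul]
    have hdegP : (∏ σ ∈ s, (Polynomial.X - Polynomial.C (l σ))).natDegree ≤ s.card := by
      refine le_trans (Polynomial.natDegree_prod_le _ _) ?_
      rw [Finset.sum_congr rfl (fun σ _ => Polynomial.natDegree_X_sub_C (l σ))]
      simp
    rcases k with _ | n
    · rw [Polynomial.mul_coeff_zero, Polynomial.coeff_X_zero, zero_mul, zero_sub]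
      have h := ((hl a).mul (ih 0)).neg
      have harith : 1 + (s.card - 0) = s.card + 1 - 0 := by omega
      rwa [harith] at h
    · rw [Polynomial.coeff_X_mul]
      have h1 := ih n
      have harith1 : s.card - n = s.card + 1 - (n + 1) := by omega
      rw [harith1] at h1
      refine h1.sub ?_
      by_cases h : n + 1 ≤ s.card
      · have h2 := (hl a).mul (ih (n + 1))
        have harith2 : 1 + (s.card - (n + 1)) = s.card + 1 - (n + 1) := by omega
        rwa [harith2] at h2
      · have hz : (∏ σ ∈ s, (Polynomial.X - Polynomial.C (l σ))).coeff (n + 1) = 0 :=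
          Polynomial.coeff_eq_zero_of_natDegree_lt (by omega)
        rw [hz, mul_zero]
        exact isHomogeneous_zero _ _ _

lemma isInv_coeff_prod [Fintype G] (i : ι) (k : ℕ) :
    IsInv ρ ((∏ σ : G, (Polynomial.X - Polynomial.C (polyAct ρ σ (X i)))).coeff k) := by
  intro τ
  let φ : MvPolynomial ι F →+* MvPolynomial ι F :=
    (MvPolynomial.aeval
      (fun i' => ∑ j, ((ρ τ⁻¹ : Matrix ι ι F) i' j) • (X j : MvPolynomial ι F))).toRingHom
  have hφ : ∀ x, polyAct ρ τ x = φ x := fun x => rfl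
  rw [hφ, ← Polynomial.coeff_map]
  congr 1
  rw [Polynomial.map_prod]
  have hfac : ∀ σ : G, (Polynomial.X - Polynomial.C (polyAct ρ σ (X i))).map φ
      = Polynomial.X - Polynomial.C (polyAct ρ (τ * σ) (X i)) := by
    intro σ
    rw [Polynomial.map_sub, Polynomial.map_X, Polynomial.map_C]
    congr 1
    rw [← hφ, polyAct_polyAct]
  rw [Finset.prod_congr rfl (fun σ _ => hfac σ)]
  exact Fintype.prod_equiv (Equiv.mulLeft τ)
    (fun σ => Polynomial.X - Polynomial.C (polyAct ρ (τ * σ) (X i)))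
    (fun σ => Polynomial.X - Polynomial.C (polyAct ρ σ (X i))) (fun σ => rfl)

lemma X_pow_mem [Fintype G] (i : ι) :
    (X i : MvPolynomial ι F) ^ (Fintype.card G) ∈ hilbertIdeal ρ := by
  classical
  set P : Polynomial (MvPolynomial ι F) :=
    ∏ σ : G, (Polynomial.X - Polynomial.C (polyAct ρ σ (X i))) with hP
  have hmonic : P.Monic :=
    Polynomial.monic_prod_of_monic _ _ (fun σ _ => Polynomial.monic_X_sub_C _)
  have hdeg : P.natDegree = Fintype.card G := by
    rw [hP, Polynomial.natDegree_prod_of_monic _ _ (fun σ _ => Polynomial.monic_X_sub_C _)]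
    simp
  have heval : Polynomial.eval (X i : MvPolynomial ι F) P = 0 := by
    rw [hP, Polynomial.eval_prod]
    apply Finset.prod_eq_zero (Finset.mem_univ (1 : G))
    rw [Polynomial.eval_sub, Polynomial.eval_X, Polynomial.eval_C, polyAct_one, sub_self]
  have hcoeff : ∀ k, k < Fintype.card G → P.coeff k ∈ hilbertIdeal ρ := by
    intro k hk
    apply Ideal.subset_span
    refine ⟨⟨Fintype.card G - k, by omega, ?_⟩, isInv_coeff_prod ρ i k⟩
    have h := coeff_prod_isHomogeneous Finset.univ (fun σ => polyAct ρ σ (X i))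
      (fun σ => isHomogeneous_polyAct_X ρ σ i) k
    simpa [Finset.card_univ] using h
  have hexp := Polynomial.eval_eq_sum_range' (p := P) (x := (X i : MvPolynomial ι F))
    (n := Fintype.card G + 1) (by omega)
  have hlead : P.coeff (Fintype.card G) = 1 := by rw [← hdeg]; exact hmonic.coeff_natDegree
  rw [heval, Finset.sum_range_succ, hlead, one_mul] at hexp
  have hx : (X i : MvPolynomial ι F) ^ (Fintype.card G)
      = -∑ k ∈ Finset.range (Fintype.card G), P.coeff k * (X i : MvPolynomial ι F) ^ k := by
    linear_combination -hexp
  rw [hx]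
  refine neg_mem (Ideal.sum_mem _ (fun k hk => ?_))
  exact Ideal.mul_mem_right _ _ (hcoeff k (Finset.mem_range.mp hk))

lemma hilbert_finiteDimensional [Fintype G] :
    FiniteDimensional F (MvPolynomial ι F ⧸ hilbertIdeal ρ) := by
  classical
  have hg : 0 < Fintype.card G := Fintype.card_pos
  let q := Ideal.Quotient.mkₐ F (hilbertIdeal ρ)
  let s : Finset (MvPolynomial ι F ⧸ hilbertIdeal ρ) :=
    Finset.image (fun t : ι → Fin (Fintype.card G) =>
      q (monomial (Finsupp.equivFunOnFinite.symm (fun i => ((t i : ℕ)))) 1)) Finset.univ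
  have hmon : ∀ d : ι →₀ ℕ, q (monomial d 1) ∈ Submodule.span F (↑s : Set (MvPolynomial ι F ⧸ hilbertIdeal ρ)) := by
    intro d
    by_cases h : ∀ i, d i < Fintype.card G
    · apply Submodule.subset_span
      refine Finset.mem_coe.mpr (Finset.mem_image.mpr ⟨fun i => ⟨d i, h i⟩, Finset.mem_univ _, ?_⟩)
      have he : (fun i => (((⟨d i, h i⟩ : Fin (Fintype.card G))) : ℕ)) = ⇑d := rfl
      rw [show (Finsupp.equivFunOnFinite.symm
          (fun i => (((⟨d i, h i⟩ : Fin (Fintype.card G))) : ℕ))) = d from by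
        rw [he]; exact Finsupp.equivFunOnFinite_symm_coe d]
    · push_neg at h
      obtain ⟨i, hi⟩ := h
      have hle : Finsupp.single i (Fintype.card G) ≤ d := Finsupp.single_le_iff.mpr hi
      have hsplit : (monomial d (1 : F)) =
          (X i : MvPolynomial ι F) ^ (Fintype.card G)
            * monomial (d - Finsupp.single i (Fintype.card G)) 1 := by
        rw [X_pow_eq_monomial, monomial_mul, one_mul, add_tsub_cancel_of_le hle]
      rw [hsplit, map_mul]
      have hzero : q ((X i : MvPolynomial ι F) ^ (Fintype.card G)) = 0 := by
        rw [Ideal.Quotient.mkₐ_eq_mk]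
        exact Ideal.Quotient.eq_zero_iff_mem.mpr (X_pow_mem ρ i)
      rw [hzero, zero_mul]
      exact Submodule.zero_mem _
  have hspan : Submodule.span F (↑s : Set (MvPolynomial ι F ⧸ hilbertIdeal ρ)) = ⊤ := by
    rw [eq_top_iff]
    rintro x -
    obtain ⟨f, rfl⟩ := Ideal.Quotient.mkₐ_surjective F (hilbertIdeal ρ) x
    induction f using MvPolynomial.induction_on' with
    | monomial d a =>
      have hm : (monomial d a : MvPolynomial ι F) = a • monomial d 1 := by
        rw [smul_monomial, smul_eq_mul, mul_one]
      rw [hm, map_smul]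
      exact Submodule.smul_mem _ _ (hmon d)
    | add p q' hp hq => rw [map_add]; exact Submodule.add_mem _ hp hq
  exact ⟨⟨s, hspan⟩⟩

end Part2

section Main

open CoinvAux

lemma coinvDim_lower [Fintype G] (ρ : G →* (Matrix ι ι F)ˣ)
    (hnontrivial : ∃ σ : G, ρ σ ≠ 1) (m : ℕ) :
    m + 1 ≤ coinvDim (glPow ρ m) := by
  classical
  obtain ⟨σ₀, hσ₀⟩ := hnontrivial
  set B : Matrix ι ι F := ((ρ σ₀⁻¹ : (Matrix ι ι F)ˣ) : Matrix ι ι F) with hBdef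
  have hB : B ≠ 1 := by
    intro h
    apply hσ₀
    have h1 : ρ σ₀⁻¹ = 1 := Units.ext (by rw [← hBdef, h, Units.val_one])
    rw [map_inv, inv_eq_one] at h1
    exact h1
  obtain ⟨a, b, hab⟩ : ∃ a b, B a b ≠ (1 : Matrix ι ι F) a b := by
    by_contra h
    push_neg at h
    exact hB (Matrix.ext fun a b => h a b)
  haveI : FiniteDimensional F (MvPolynomial (ι × Fin m) F ⧸ hilbertIdeal (glPow ρ m)) :=
    hilbert_finiteDimensional (glPow ρ m)
  set q := Ideal.Quotient.mkₐ F (hilbertIdeal (glPow ρ m)) with hq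
  set z : Fin (m + 1) → (MvPolynomial (ι × Fin m) F ⧸ hilbertIdeal (glPow ρ m)) :=
    fun k => Fin.cases (q 1) (fun k' => q (X (a, k'))) k with hzdef
  have hN : ((glPow ρ m σ₀⁻¹ : (Matrix (ι × Fin m) (ι × Fin m) F)ˣ)
        : Matrix (ι × Fin m) (ι × Fin m) F)
      = Matrix.blockDiagonal (fun _ : Fin m => B) := rfl
  have hz : LinearIndependent F z := by
    rw [Fintype.linearIndependent_iff]
    intro c hc
    set y : MvPolynomial (ι × Fin m) F := C (c 0) + ∑ k : Fin m, c k.succ • X (a, k) with hy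
    have hqy : q y = ∑ k : Fin (m + 1), c k • z k := by
      rw [hy, map_add, map_sum, Fin.sum_univ_succ]
      have hC : q (C (c 0)) = c 0 • z 0 := by
        rw [show (C (c 0) : MvPolynomial (ι × Fin m) F) = c 0 • 1 from by
          rw [smul_eq_C_mul, mul_one], map_smul]
        rfl
      rw [hC]
      exact congrArg (fun t => c 0 • z 0 + t)
        (Finset.sum_congr rfl fun k _ => by rw [map_smul]; rfl)
    have hyH : y ∈ hilbertIdeal (glPow ρ m) := by
      have hq0 : q y = 0 := by rw [hqy, hc]
      rw [hq, Ideal.Quotient.mkₐ_eq_mk] at hq0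
      exact Ideal.Quotient.eq_zero_iff_mem.mp hq0
    obtain ⟨hc0, hlin⟩ := hilbert_vanish (glPow ρ m) σ₀ y hyH
    have hcc : constantCoeff y = c 0 := by
      rw [hy, map_add, constantCoeff_C, map_sum]
      rw [Finset.sum_congr rfl (fun k _ => by
        rw [constantCoeff_smul, constantCoeff_X, smul_zero])]
      simp
    have hc0' : c 0 = 0 := by rw [← hcc]; exact hc0
    have hlincy : ∀ p : ι × Fin m, linc y p = if p.1 = a then c (p.2.succ) else 0 := by
      rintro ⟨pi, pk⟩
      rw [hy, linc_add, linc_C, zero_add, linc_sum]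
      rw [Finset.sum_congr rfl (fun k _ => by rw [linc_smul, linc_X])]
      by_cases hpa : pi = a
      · subst hpa
        simp [Prod.ext_iff, mul_ite, Finset.sum_ite_eq']
      · simp [Prod.ext_iff, Ne.symm hpa, hpa]
    intro k
    refine Fin.cases hc0' (fun l => ?_) k
    have h1 := hlin (b, l)
    rw [hN] at h1
    have hL : ∑ p : ι × Fin m, (Matrix.blockDiagonal (fun _ : Fin m => B)) p (b, l) * linc y p
        = B a b * c l.succ := by
      rw [Fintype.sum_prod_type]
      have inner : ∀ i : ι, (∑ k' : Fin m,
          (Matrix.blockDiagonal (fun _ : Fin m => B)) (i, k') (b, l) * linc y (i, k'))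
          = if i = a then B i b * c l.succ else 0 := by
        intro i
        rw [Finset.sum_congr rfl (fun k' _ => by
          rw [Matrix.blockDiagonal_apply, hlincy])]
        simp only []
        rw [Finset.sum_eq_single l]
        · by_cases hia : i = a <;> simp [hia]
        · intro k' _ hk'
          simp [hk']
        · intro h
          exact absurd (Finset.mem_univ l) h
      rw [Finset.sum_congr rfl (fun i _ => inner i), Finset.sum_ite_eq', if_pos (Finset.mem_univ a)]
    rw [hL, hlincy] at h1
    simp only [] at h1
    have hne : B a b - (if a = b then 1 else 0) ≠ 0 := by
      refine sub_ne_zero.mpr ?_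
      rw [← Matrix.one_apply]
      exact hab
    have hzero : (B a b - (if a = b then 1 else 0)) * c l.succ = 0 := by
      rw [sub_mul, h1]
      by_cases hba : b = a
      · subst hba; simp
      · simp [hba, Ne.symm hba]
    exact (mul_eq_zero.mp hzero).resolve_left hne
  have hrank := finrank_span_eq_card hz
  calc m + 1 = Fintype.card (Fin (m + 1)) := by simp
    _ = Module.finrank F (Submodule.span F (Set.range z)) := hrank.symm
    _ ≤ Module.finrank F (MvPolynomial (ι × Fin m) F ⧸ hilbertIdeal (glPow ρ m)) :=
        Submodule.finrank_le _
    _ = coinvDim (glPow ρ m) := rfl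

end Main

/-- For a non-trivial `G`-module `V`, the dimension of the vector
coinvariants grows unboundedly: `lim_{m→∞} dim_F F[V^m]_G = ∞`. -/
theorem coinvDim_glPow_tendsto_atTop [Fintype G] (ρ : G →* (Matrix ι ι F)ˣ)
    (hnontrivial : ∃ σ : G, ρ σ ≠ 1) :
    Filter.Tendsto (fun m : ℕ => coinvDim (glPow ρ m)) Filter.atTop Filter.atTop := by
  exact Filter.tendsto_atTop_mono (fun m => coinvDim_lower ρ hnontrivial m)
    (Filter.tendsto_add_atTop_nat 1)
end

section
/- Let F be a field, G a finite group with |G| not divisible by the characteristic of F, and V a G-module with A := F[V] = F[x_1,…,x_n] and B := F[V^m] = F[x_{1,1},…,x_{n,m}]. Let φ : A → B[t_1,…,t_m] be the algebra homomorphism sending x_i to x_{i,1}t_1 + … + x_{i,m}t_m, and for f ∈ A write φ(f) = Σ f_{i_1,…,i_m} t_1^{i_1}⋯t_m^{i_m} with coefficients f_{i_1,…,i_m} ∈ B (the polarizations of f). If f lies in the Hilbert ideal I_A = A^G_+ A, then every polarization f_{i_1,…,i_m} lies in the Hilbert ideal I_B = B^G_+ B. -/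
open MvPolynomial

variable {F G ι : Type*} [Field F] [Group G] [Fintype ι] [DecidableEq ι]

/-- Polarization: the algebra map `φ : F[V] → F[V^m][t₁,…,t_m]` sending
`x_i ↦ x_{i,1} t_1 + … + x_{i,m} t_m`.  The polarizations of `f ∈ F[V]` are the
coefficients of `φ f` with respect to the monomials in the `t`-variables. -/
noncomputable def polarizeMap (m : ℕ) :
    MvPolynomial ι F →ₐ[F] MvPolynomial (Fin m) (MvPolynomial (ι × Fin m) F) :=
  MvPolynomial.aeval fun i =>
    ∑ k : Fin m, MvPolynomial.C (MvPolynomial.X (i, k)) * MvPolynomial.X k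

lemma glPow_coe (ρ : G →* (Matrix ι ι F)ˣ) (m : ℕ) (σ : G) :
    ((glPow ρ m σ : (Matrix (ι × Fin m) (ι × Fin m) F)ˣ) : Matrix (ι × Fin m) (ι × Fin m) F)
      = Matrix.blockDiagonal fun _ => (ρ σ : Matrix ι ι F) := rfl

/-- The action of `σ` on `B = F[V^m]` as an algebra hom. -/
noncomputable def actB (ρ : G →* (Matrix ι ι F)ˣ) (m : ℕ) (σ : G) :
    MvPolynomial (ι × Fin m) F →ₐ[F] MvPolynomial (ι × Fin m) F :=
  MvPolynomial.aeval fun p =>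
    ∑ q, (((glPow ρ m) σ⁻¹ : Matrix (ι × Fin m) (ι × Fin m) F) p q) • MvPolynomial.X q

lemma polarize_comm (ρ : G →* (Matrix ι ι F)ˣ) (m : ℕ) (σ : G) (f : MvPolynomial ι F) :
    polarizeMap m (polyAct ρ σ f)
      = MvPolynomial.mapAlgHom (actB ρ m σ) (polarizeMap m f) := by
  have h : ((polarizeMap m).comp
        (MvPolynomial.aeval fun i => ∑ j, ((ρ σ⁻¹ : Matrix ι ι F) i j) • (X j : MvPolynomial ι F)) :
        MvPolynomial ι F →ₐ[F] _)
      = (MvPolynomial.mapAlgHom (actB ρ m σ)).comp (polarizeMap m) := by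
    apply MvPolynomial.algHom_ext
    intro i
    simp only [AlgHom.comp_apply, aeval_X, polarizeMap, map_sum, map_smul, map_mul,
      mapAlgHom_apply, MvPolynomial.map_C, MvPolynomial.map_X,
      actB, glPow_coe]
    simp only [eval₂_C, eval₂_X, RingHom.comp_apply, RingHom.coe_coe, aeval_X,
      Matrix.blockDiagonal_apply, Fintype.sum_prod_type]
    simp only [ite_smul, zero_smul, Finset.sum_ite_eq, Finset.mem_univ, if_true, map_sum,
      Finset.smul_sum, Finset.sum_mul, smul_mul_assoc]
    rw [Finset.sum_comm]
    refine Finset.sum_congr rfl fun k _ => Finset.sum_congr rfl fun j _ => ?_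
    rw [Algebra.smul_def, Algebra.smul_def, map_mul, ← mul_assoc]
    congr 1
  calc polarizeMap m (polyAct ρ σ f) = ((polarizeMap m).comp (MvPolynomial.aeval fun i => ∑ j, ((ρ σ⁻¹ : Matrix ι ι F) i j) • (X j : MvPolynomial ι F))) f := rfl
    _ = _ := by rw [h]; rfl

/-- All `t`-coefficients are homogeneous of degree `D`. -/
def AllCoeff (m : ℕ) (D : ℕ) (g : MvPolynomial (Fin m) (MvPolynomial (ι × Fin m) F)) : Prop :=
  ∀ d, (MvPolynomial.coeff d g).IsHomogeneous D

lemma allCoeff_algebraMap (m : ℕ) (c : F) :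
    AllCoeff m 0 (MvPolynomial.C (MvPolynomial.C c) :
      MvPolynomial (Fin m) (MvPolynomial (ι × Fin m) F)) := by
  intro d
  rw [coeff_C]
  split
  · exact isHomogeneous_C _ _
  · exact isHomogeneous_zero _ _ _

lemma allCoeff_mul {m D₁ D₂ : ℕ} {g h : MvPolynomial (Fin m) (MvPolynomial (ι × Fin m) F)}
    (hg : AllCoeff m D₁ g) (hh : AllCoeff m D₂ h) : AllCoeff m (D₁ + D₂) (g * h) := by
  intro d
  rw [coeff_mul]
  exact IsHomogeneous.sum _ _ _ fun x _ => (hg x.1).mul (hh x.2)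

lemma allCoeff_gen (m : ℕ) (i : ι) :
    AllCoeff m 1 (∑ k : Fin m, MvPolynomial.C (MvPolynomial.X (i, k)) * MvPolynomial.X k :
      MvPolynomial (Fin m) (MvPolynomial (ι × Fin m) F)) := by
  intro d
  simp only [MvPolynomial.coeff_sum]
  refine IsHomogeneous.sum _ _ _ fun k _ => ?_
  rw [coeff_C_mul, coeff_X']
  split
  · rw [mul_one]; exact isHomogeneous_X _ _
  · rw [mul_zero]; exact isHomogeneous_zero _ _ _

lemma allCoeff_one (m : ℕ) :
    AllCoeff m 0 (1 : MvPolynomial (Fin m) (MvPolynomial (ι × Fin m) F)) := by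
  have := allCoeff_algebraMap (F := F) (ι := ι) m 1
  simpa using this

lemma allCoeff_pow {m D : ℕ} {g : MvPolynomial (Fin m) (MvPolynomial (ι × Fin m) F)}
    (hg : AllCoeff m D g) : ∀ n : ℕ, AllCoeff m (D * n) (g ^ n)
  | 0 => by rw [pow_zero, Nat.mul_zero]; exact allCoeff_one m
  | n + 1 => by
      rw [pow_succ, Nat.mul_succ]
      exact allCoeff_mul (allCoeff_pow hg n) hg

lemma allCoeff_monomial (m : ℕ) (u : ι →₀ ℕ) (c : F) :
    AllCoeff m u.degree (polarizeMap m (MvPolynomial.monomial u c)) := by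
  rw [polarizeMap, aeval_monomial]
  have : u.degree = 0 + ∑ i ∈ u.support, 1 * u i := by
    simp [Finsupp.degree]; rfl
  rw [this, Finsupp.prod]
  refine allCoeff_mul ?_ ?_
  · exact allCoeff_algebraMap m c
  · classical
    induction u.support using Finset.induction with
    | empty => simpa using allCoeff_one m
    | insert _ _ hx ih =>
        rw [Finset.prod_insert hx, Finset.sum_insert hx]
        exact allCoeff_mul (allCoeff_pow (allCoeff_gen m _) _) ih

lemma allCoeff_polarize {D : ℕ} (m : ℕ) {f : MvPolynomial ι F} (hf : f.IsHomogeneous D) :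
    AllCoeff m D (polarizeMap m f) := by
  intro d
  conv_lhs => rw [← support_sum_monomial_coeff f]
  rw [map_sum]
  simp only [MvPolynomial.coeff_sum]
  refine IsHomogeneous.sum _ _ _ fun u hu => ?_
  have hdeg : u.degree = D := by
    rw [Finsupp.degree_eq_weight_one]; exact hf (mem_support_iff.mp hu)
  exact hdeg ▸ allCoeff_monomial m u _ d

/-- If `f` lies in the Hilbert ideal `I_A = A^G_+ A` of
`A = F[V]`, then every polarization of `f` lies in the Hilbert ideal
`I_B = B^G_+ B` of `B = F[V^m]`. -/
theorem polarization_mem_hilbertIdeal [Fintype G] (hchar : (Fintype.card G : F) ≠ 0)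
    (ρ : G →* (Matrix ι ι F)ˣ) (m : ℕ) (f : MvPolynomial ι F)
    (hf : f ∈ hilbertIdeal ρ) (d : Fin m →₀ ℕ) :
    MvPolynomial.coeff d (polarizeMap m f) ∈ hilbertIdeal (glPow ρ m) := by
  revert d
  refine Submodule.span_induction
    (p := fun f _ => ∀ d, MvPolynomial.coeff d (polarizeMap m f) ∈ hilbertIdeal (glPow ρ m))
    ?_ ?_ ?_ ?_ hf
  · rintro g ⟨⟨D, hD, hhom⟩, hinv⟩ d
    refine Ideal.subset_span ⟨⟨D, hD, allCoeff_polarize m hhom d⟩, fun σ => ?_⟩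
    show actB ρ m σ (MvPolynomial.coeff d (polarizeMap m g)) = _
    calc actB ρ m σ (MvPolynomial.coeff d (polarizeMap m g))
        = MvPolynomial.coeff d
            (MvPolynomial.map (actB ρ m σ).toRingHom (polarizeMap m g)) :=
          (MvPolynomial.coeff_map _ _ _).symm
      _ = MvPolynomial.coeff d (MvPolynomial.mapAlgHom (actB ρ m σ) (polarizeMap m g)) := rfl
      _ = MvPolynomial.coeff d (polarizeMap m (polyAct ρ σ g)) := by rw [polarize_comm]
      _ = MvPolynomial.coeff d (polarizeMap m g) := by rw [hinv σ]
  · intro d; simp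
  · intro x y _ _ hx hy d
    rw [map_add, MvPolynomial.coeff_add]
    exact Ideal.add_mem _ (hx d) (hy d)
  · intro a x _ hx d
    rw [smul_eq_mul, map_mul, MvPolynomial.coeff_mul]
    exact Ideal.sum_mem _ fun c _ => Ideal.mul_mem_left _ _ (hx c.2)
end

section
/- Let F be a field of characteristic p > 0, G a finite group with p dividing |G|, and V a G-module. If f ∈ F[V] is homogeneous of degree strictly greater than topdeg F[V]_G, then the transfer Tr(f) = Σ_{σ∈G} σ(f) is a decomposable invariant, i.e., Tr(f) lies in (F[V]^G_+)², the square of the maximal homogeneous ideal of the invariant ring. -/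
set_option synthInstance.maxHeartbeats 1000000
set_option maxHeartbeats 1000000

open MvPolynomial

variable {F G ι : Type*} [Field F] [Group G] [Fintype ι] [DecidableEq ι]

/-- The invariant ring `F[V]^G` as a subalgebra of `F[V]`. -/
noncomputable def invAlg (ρ : G →* (Matrix ι ι F)ˣ) : Subalgebra F (MvPolynomial ι F) where
  carrier := {f | IsInv ρ f}
  mul_mem' := by
    intro a b ha hb σ
    have h : polyAct ρ σ (a * b) = polyAct ρ σ a * polyAct ρ σ b :=
      map_mul (MvPolynomial.aeval _) a b
    rw [h, ha σ, hb σ]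
  add_mem' := by
    intro a b ha hb σ
    have h : polyAct ρ σ (a + b) = polyAct ρ σ a + polyAct ρ σ b :=
      map_add (MvPolynomial.aeval _) a b
    rw [h, ha σ, hb σ]
  algebraMap_mem' := by
    intro r σ
    exact (MvPolynomial.aeval _).commutes r

/-- The transfer (trace) map `Tr(f) = Σ_{σ ∈ G} σ(f)`. -/
noncomputable def transfer [Fintype G] (ρ : G →* (Matrix ι ι F)ˣ)
    (f : MvPolynomial ι F) : MvPolynomial ι F :=
  ∑ σ : G, polyAct ρ σ f

/-- The maximal homogeneous ideal `F[V]^G_+` of the invariant ring: the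
invariants with vanishing constant term, as an ideal of `F[V]^G`. -/
noncomputable def augIdeal (ρ : G →* (Matrix ι ι F)ˣ) : Ideal ↥(invAlg ρ) where
  carrier := {f | MvPolynomial.constantCoeff (f : MvPolynomial ι F) = 0}
  zero_mem' := by simp
  add_mem' := by
    intro a b ha hb
    simp only [Set.mem_setOf_eq] at *
    rw [Subalgebra.coe_add, map_add, ha, hb, add_zero]
  smul_mem' := by
    intro c x hx
    simp only [Set.mem_setOf_eq, smul_eq_mul] at *
    rw [Subalgebra.coe_mul, map_mul, hx, mul_zero]



namespace StatementAux

variable (ρ : G →* (Matrix ι ι F)ˣ)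

noncomputable def actHom (σ : G) : MvPolynomial ι F →ₐ[F] MvPolynomial ι F :=
  MvPolynomial.aeval
    (fun i => ∑ j, ((ρ σ⁻¹ : Matrix ι ι F) i j) • (MvPolynomial.X j : MvPolynomial ι F))

lemma actHom_apply (σ : G) (f : MvPolynomial ι F) : actHom ρ σ f = polyAct ρ σ f := rfl

lemma polyAct_one (f : MvPolynomial ι F) : polyAct ρ 1 f = f := by
  rw [polyAct]
  have h : (fun i => ∑ j, ((ρ (1:G)⁻¹ : Matrix ι ι F) i j) •
      (MvPolynomial.X j : MvPolynomial ι F)) = fun i => MvPolynomial.X i := by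
    funext i
    simp [Matrix.one_apply, ite_smul]
  rw [h]
  exact MvPolynomial.aeval_X_left_apply f

lemma polyAct_mul (τ σ : G) (f : MvPolynomial ι F) :
    polyAct ρ τ (polyAct ρ σ f) = polyAct ρ (τ * σ) f := by
  rw [polyAct, polyAct, polyAct, MvPolynomial.comp_aeval_apply]
  have hfun : (fun i => (MvPolynomial.aeval fun i => ∑ j, ((ρ τ⁻¹ : Matrix ι ι F) i j) •
        (MvPolynomial.X j : MvPolynomial ι F))
        (∑ j, ((ρ σ⁻¹ : Matrix ι ι F) i j) • (MvPolynomial.X j : MvPolynomial ι F)))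
      = fun i => ∑ k, ((ρ (τ * σ)⁻¹ : Matrix ι ι F) i k) •
        (MvPolynomial.X k : MvPolynomial ι F) := by
    funext i
    have hm : ((ρ (τ * σ)⁻¹ : Matrix ι ι F))
        = (ρ σ⁻¹ : Matrix ι ι F) * (ρ τ⁻¹ : Matrix ι ι F) := by
      rw [mul_inv_rev, map_mul, Units.val_mul]
    simp only [map_sum, map_smul, MvPolynomial.aeval_X, hm, Matrix.mul_apply,
      Finset.smul_sum, smul_smul, Finset.sum_smul]
    rw [Finset.sum_comm]
  rw [hfun]
lemma polyAct_isHomogeneous (σ : G) {f : MvPolynomial ι F} {n : ℕ}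
    (hf : f.IsHomogeneous n) : (polyAct ρ σ f).IsHomogeneous n := by
  rw [polyAct]
  have := hf.aeval (fun i => ∑ j, ((ρ σ⁻¹ : Matrix ι ι F) i j) •
      (MvPolynomial.X j : MvPolynomial ι F)) (n := 1) ?_
  · simpa using this
  · intro i
    apply MvPolynomial.IsHomogeneous.sum
    intro j _
    rw [MvPolynomial.smul_eq_C_mul]
    exact MvPolynomial.isHomogeneous_C_mul_X _ _

lemma constantCoeff_polyAct (σ : G) (f : MvPolynomial ι F) :
    MvPolynomial.constantCoeff (polyAct ρ σ f) = MvPolynomial.constantCoeff f := by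
  have h0 : ∀ g : MvPolynomial ι F, MvPolynomial.constantCoeff g
      = MvPolynomial.aeval (fun _ : ι => (0:F)) g := by
    intro g; rw [MvPolynomial.aeval_zero']; simp
  rw [polyAct, h0, h0 f, MvPolynomial.comp_aeval_apply]
  have : (fun i => (MvPolynomial.aeval fun _ : ι => (0:F))
      (∑ j, ((ρ σ⁻¹ : Matrix ι ι F) i j) • (MvPolynomial.X j : MvPolynomial ι F)))
      = fun _ : ι => (0:F) := by
    funext i
    simp
  rw [this]


variable [Fintype G]

lemma isInv_transfer (f : MvPolynomial ι F) : IsInv ρ (transfer ρ f) := by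
  intro τ
  rw [transfer, ← actHom_apply, map_sum]
  simp only [actHom_apply, polyAct_mul]
  exact Fintype.sum_equiv (Equiv.mulLeft τ) _ _ (fun σ => rfl)

lemma constantCoeff_transfer (p : ℕ) [CharP F p] (hdvd : p ∣ Fintype.card G)
    (f : MvPolynomial ι F) :
    MvPolynomial.constantCoeff (transfer ρ f) = 0 := by
  rw [transfer, map_sum]
  simp only [constantCoeff_polyAct]
  rw [Finset.sum_const, Finset.card_univ, nsmul_eq_mul]
  have : ((Fintype.card G : F)) = 0 := (CharP.cast_eq_zero_iff F p _).mpr hdvd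
  rw [this, zero_mul]

lemma transfer_mul_inv (c t : MvPolynomial ι F) (ht : IsInv ρ t) :
    transfer ρ (c * t) = transfer ρ c * t := by
  rw [transfer, transfer, Finset.sum_mul]
  refine Finset.sum_congr rfl (fun σ _ => ?_)
  rw [← actHom_apply, map_mul, actHom_apply, actHom_apply, ht σ]

/-- `X i ^ |G|` lies in the Hilbert ideal. -/
lemma X_pow_card_mem (i : ι) : (MvPolynomial.X i : MvPolynomial ι F) ^ Fintype.card G
    ∈ hilbertIdeal ρ := by
  classical
  set g := Fintype.card G with hg
  set a : G → MvPolynomial ι F := fun σ => polyAct ρ σ (MvPolynomial.X i) with ha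
  set q : Polynomial (MvPolynomial ι F) :=
    ∏ σ : G, (Polynomial.X - Polynomial.C (a σ)) with hq
  have hmonic : q.Monic := Polynomial.monic_prod_of_monic _ _ (fun σ _ => Polynomial.monic_X_sub_C _)
  have hdeg : q.natDegree = g := by
    rw [hq, Polynomial.natDegree_prod _ _ (fun σ _ => Polynomial.X_sub_C_ne_zero _)]
    simp [Polynomial.natDegree_X_sub_C, hg]
  -- evaluation at X i is zero
  have heval : Polynomial.eval (MvPolynomial.X i) q = 0 := by
    rw [hq, Polynomial.eval_prod]
    refine Finset.prod_eq_zero (Finset.mem_univ (1 : G)) ?_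
    rw [Polynomial.eval_sub, Polynomial.eval_X, Polynomial.eval_C, ha]
    simp [polyAct_one]
  -- each coefficient of q below degree g is invariant
  have hinv : ∀ k, IsInv ρ (q.coeff k) := by
    intro k τ
    have hmap : q.map ((actHom ρ τ : MvPolynomial ι F →ₐ[F] MvPolynomial ι F) :
        MvPolynomial ι F →+* MvPolynomial ι F) = q := by
      rw [hq, Polynomial.map_prod]
      simp only [Polynomial.map_sub, Polynomial.map_X, Polynomial.map_C]
      have : ∀ σ : G, actHom ρ τ (a σ) = a (τ * σ) := by
        intro σ
        rw [actHom_apply, ha]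
        exact polyAct_mul ρ τ σ _
      refine Fintype.prod_equiv (Equiv.mulLeft τ) _ _ (fun σ => ?_)
      simp only [RingHom.coe_coe, this σ]
      rfl
    conv_rhs => rw [← hmap]
    rw [Polynomial.coeff_map]
    rfl
  -- each coefficient of q at k < g is homogeneous of degree g - k
  have hhom : ∀ k, k ≤ g → (q.coeff k).IsHomogeneous (g - k) := by
    intro k hk
    have hq' : q = ((Finset.univ.val.map a).map (fun t => Polynomial.X - Polynomial.C t)).prod := by
      rw [hq]
      rw [show ((Finset.univ.val.map a).map (fun t => Polynomial.X - Polynomial.C t))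
        = Finset.univ.val.map ((fun t => Polynomial.X - Polynomial.C t) ∘ a) from
        (Multiset.map_map _ _ _)]
      rfl
    have hcard : Multiset.card (Finset.univ.val.map a) = g := by simp [hg]
    rw [hq', Multiset.prod_X_sub_C_coeff _ (by rw [hcard]; exact hk), hcard]
    have hesymm : (Multiset.esymm (Finset.univ.val.map a) (g - k)).IsHomogeneous (g - k) := by
      rw [Multiset.esymm]
      rw [← MvPolynomial.mem_homogeneousSubmodule]
      apply multiset_sum_mem
      intro x hx
      rw [Multiset.mem_map] at hx
      obtain ⟨t, ht, rfl⟩ := hx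
      rw [Multiset.mem_powersetCard] at ht
      rw [MvPolynomial.mem_homogeneousSubmodule, ← ht.2]
      have hmem : ∀ x ∈ t, MvPolynomial.IsHomogeneous x 1 := by
        intro x hxt
        have hxs := Multiset.mem_of_le ht.1 hxt
        rw [Multiset.mem_map] at hxs
        obtain ⟨σ, _, rfl⟩ := hxs
        exact polyAct_isHomogeneous ρ σ (MvPolynomial.isHomogeneous_X F i)
      clear ht hk
      induction t using Multiset.induction with
      | empty => simpa using MvPolynomial.isHomogeneous_one ι F
      | cons x t ih =>
        rw [Multiset.prod_cons, Multiset.card_cons]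
        have := (hmem x (Multiset.mem_cons_self x t)).mul
          (ih (fun y hy => hmem y (Multiset.mem_cons_of_mem hy)))
        simpa [add_comm] using this
    have h1 : ((-1 : MvPolynomial ι F) ^ (g - k)) = MvPolynomial.C ((-1 : F) ^ (g - k)) := by
      rw [map_pow, map_neg, map_one]
    rw [h1]
    simpa using (MvPolynomial.isHomogeneous_C _ ((-1 : F) ^ (g - k))).mul hesymm
  -- assemble
  have h0 : ∑ k ∈ Finset.range (g + 1), q.coeff k * (MvPolynomial.X i : MvPolynomial ι F) ^ k
      = 0 := by
    rw [← hdeg, ← Polynomial.eval_eq_sum_range]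
    exact heval
  have hcg : q.coeff g = 1 := by
    rw [← hdeg]; exact hmonic.coeff_natDegree
  rw [Finset.sum_range_succ, hcg, one_mul] at h0
  have hX : (MvPolynomial.X i : MvPolynomial ι F) ^ g
      = -∑ k ∈ Finset.range g, q.coeff k * (MvPolynomial.X i : MvPolynomial ι F) ^ k :=
    eq_neg_of_add_eq_zero_right h0
  rw [hg] at hX
  rw [hX]
  apply neg_mem
  apply Submodule.sum_mem
  intro k hk
  rw [Finset.mem_range] at hk
  have hmemk : q.coeff k ∈ hilbertIdeal ρ := by
    apply Ideal.subset_span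
    exact ⟨⟨g - k, by omega, hhom k (le_of_lt hk)⟩, hinv k⟩
  exact Ideal.mul_mem_right _ _ hmemk


/-- Every homogeneous polynomial of large enough degree lies in the Hilbert ideal. -/
lemma homogeneous_mem_hilbert {f : MvPolynomial ι F} {e : ℕ}
    (hf : f.IsHomogeneous e) (he : Fintype.card ι * (Fintype.card G - 1) < e) :
    f ∈ hilbertIdeal ρ := by
  classical
  rw [← MvPolynomial.support_sum_monomial_coeff f]
  apply Submodule.sum_mem
  intro m hm
  have hcoeff : MvPolynomial.coeff m f ≠ 0 := MvPolynomial.mem_support_iff.mp hm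
  have hdeg : m.degree = e := by
    by_contra hne
    exact hcoeff (hf.coeff_eq_zero hne)
  -- pigeonhole: some exponent is at least |G|
  have hpig : ∃ i : ι, Fintype.card G ≤ m i := by
    by_contra hcon
    push_neg at hcon
    have : m.degree ≤ Fintype.card ι * (Fintype.card G - 1) := by
      rw [Finsupp.degree]
      calc ∑ i ∈ m.support, m i ≤ ∑ i : ι, m i :=
            Finset.sum_le_sum_of_subset (Finset.subset_univ _)
        _ ≤ ∑ _i : ι, (Fintype.card G - 1) := by
            apply Finset.sum_le_sum
            intro i _
            have := hcon i
            omega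
        _ = Fintype.card ι * (Fintype.card G - 1) := by
            rw [Finset.sum_const, Finset.card_univ, smul_eq_mul]
    omega
  obtain ⟨i, hi⟩ := hpig
  have hsplit : MvPolynomial.monomial m (MvPolynomial.coeff m f)
      = MvPolynomial.monomial (m - Finsupp.single i (Fintype.card G))
          (MvPolynomial.coeff m f) * (MvPolynomial.X i : MvPolynomial ι F) ^ Fintype.card G := by
    rw [MvPolynomial.X_pow_eq_monomial, MvPolynomial.monomial_mul, mul_one]
    congr 1
    rw [tsub_add_cancel_of_le]
    rwa [Finsupp.single_le_iff]
  rw [hsplit]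
  exact Ideal.mul_mem_left _ _ (X_pow_card_mem ρ i)


lemma mem_hilbert_of_topDeg_lt {f : MvPolynomial ι F} {d : ℕ}
    (hf : f.IsHomogeneous d) (hd : topDeg ρ < d) : f ∈ hilbertIdeal ρ := by
  by_contra hnot
  have hdS : d ∈ {e : ℕ | ∃ f : MvPolynomial ι F, f.IsHomogeneous e ∧ f ∉ hilbertIdeal ρ} :=
    ⟨f, hf, hnot⟩
  have hbdd : BddAbove {e : ℕ | ∃ f : MvPolynomial ι F,
      f.IsHomogeneous e ∧ f ∉ hilbertIdeal ρ} := by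
    refine ⟨Fintype.card ι * (Fintype.card G - 1), ?_⟩
    rintro e ⟨g', hg', hg'n⟩
    by_contra hcon
    push_neg at hcon
    exact hg'n (homogeneous_mem_hilbert ρ hg' hcon)
  have hle : d ≤ topDeg ρ := le_csSup hbdd hdS
  omega

lemma transfer_sum {α : Type*} (s : Finset α) (h : α → MvPolynomial ι F) :
    transfer ρ (∑ i ∈ s, h i) = ∑ i ∈ s, transfer ρ (h i) := by
  simp only [transfer, ← actHom_apply, map_sum]
  exact Finset.sum_comm

end StatementAux

open StatementAux

/-- In the modular case (`char F = p > 0` divides `|G|`), if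
`f ∈ F[V]` is homogeneous of degree strictly greater than `topdeg F[V]_G`, then
`Tr(f)` is a decomposable invariant: `Tr(f) ∈ (F[V]^G_+)²`. -/
theorem transfer_mem_sq [Fintype G] (p : ℕ) [CharP F p] (hp : p ≠ 0)
    (hdvd : p ∣ Fintype.card G) (ρ : G →* (Matrix ι ι F)ˣ)
    (f : MvPolynomial ι F) (d : ℕ) (hf : f.IsHomogeneous d) (hd : topDeg ρ < d) :
    ∃ h : transfer ρ f ∈ invAlg ρ,
      (⟨transfer ρ f, h⟩ : ↥(invAlg ρ)) ∈ (augIdeal ρ) ^ 2 := by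
  classical
  have hmem : f ∈ hilbertIdeal ρ := mem_hilbert_of_topDeg_lt ρ hf hd
  rw [hilbertIdeal, Ideal.span, Submodule.mem_span_set'] at hmem
  obtain ⟨n, c, t, hsum⟩ := hmem
  have htr : transfer ρ f = ∑ i : Fin n, transfer ρ (c i) * ((t i : MvPolynomial ι F)) := by
    rw [← hsum, transfer_sum]
    refine Finset.sum_congr rfl (fun i _ => ?_)
    rw [smul_eq_mul]
    exact transfer_mul_inv ρ (c i) (t i) (t i).2.2
  refine ⟨isInv_transfer ρ f, ?_⟩
  -- package the summands as elements of the invariant algebra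
  set u : Fin n → ↥(invAlg ρ) := fun i => ⟨(t i : MvPolynomial ι F), (t i).2.2⟩ with hu
  set v : Fin n → ↥(invAlg ρ) := fun i => ⟨transfer ρ (c i), isInv_transfer ρ (c i)⟩ with hv
  have heq : (⟨transfer ρ f, isInv_transfer ρ f⟩ : ↥(invAlg ρ)) = ∑ i : Fin n, v i * u i := by
    apply Subtype.ext
    push_cast
    rw [htr]
  rw [heq]
  apply Submodule.sum_mem
  intro i _
  rw [pow_two]
  apply Ideal.mul_mem_mul
  · show MvPolynomial.constantCoeff ((v i : MvPolynomial ι F)) = 0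
    exact constantCoeff_transfer ρ p hdvd (c i)
  · show MvPolynomial.constantCoeff ((u i : MvPolynomial ι F)) = 0
    obtain ⟨⟨dt, hdt, hhom⟩, _⟩ := (t i).2
    rw [MvPolynomial.constantCoeff_eq]
    apply hhom.coeff_eq_zero
    rw [map_zero]
    omega
end
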